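/- With the same urn marginal as above, P_{e1}(n = 2i+2) = P_{e1}(n = 2i+1) + (1/(2i)) · (1 + i(δ−2))/(2 + (2i+1)(δ−2)) · P(X_1 = i+1 | n = 2i+1), so P_{e1} strictly increases from each odd n to the next even n (when the added term is positive). -/

import Mathlib

open Finset

/-- Marginal distribution of `X₁` in the Pólya urn with `b₁ = 1`, `b₂ = δ − 1`,
`ε = δ − 2` after `n − 1` draws. -/
noncomputable def urnMarginal (δ n x : ℕ) : ℚ :=
  ((n - 1).choose x : ℚ) *
      ((∏ l ∈ Finset.range x, ((1 : ℚ) + (l : ℚ) * ((δ : ℚ) - 2))) *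
        (∏ l ∈ Finset.range (n - 1 - x), (((δ : ℚ) - 1) + (l : ℚ) * ((δ : ℚ) - 2)))) /
    (∏ i ∈ Finset.range (n - 1), ((δ : ℚ) + (i : ℚ) * ((δ : ℚ) - 2)))

/-- `P_{e1}(n) = (1/2)P(X₁ = n/2) + P(X₁ > n/2)`. -/
noncomputable def Pe1 (δ n : ℕ) : ℚ :=
  (1 / 2) * (∑ x ∈ (Finset.range n).filter (fun x => 2 * x = n), urnMarginal δ n x)
    + ∑ x ∈ (Finset.range n).filter (fun x => 2 * x > n), urnMarginal δ n x

/-- `P_{e1}(2i+2) = P_{e1}(2i+1) + (1/(2i)) · (1+i(δ−2))/(2+(2i+1)(δ−2)) · P(X₁ = i+1 | n = 2i+1)`;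
hence `P_{e1}` strictly increases from each odd `n` to the next even `n` when the added term
is positive. -/
lemma Dpos (δ : ℕ) (hδ : 2 ≤ δ) (m : ℕ) :
    0 < ∏ l ∈ Finset.range m, ((δ : ℚ) + (l : ℚ) * ((δ : ℚ) - 2)) := by
  apply Finset.prod_pos
  intro l _
  have h2 : (2:ℚ) ≤ (δ:ℚ) := by exact_mod_cast hδ
  have hl : (0:ℚ) ≤ (l:ℚ) := Nat.cast_nonneg l
  nlinarith

lemma urnRec (δ : ℕ) (hδ : 2 ≤ δ) (i x : ℕ) (hx1 : 1 ≤ x) (hx2 : x ≤ 2*i+1) :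
    urnMarginal δ (2*i+2) x =
      (urnMarginal δ (2*i+1) x * (((δ:ℚ)-1) + ((2*i - x : ℕ):ℚ)*((δ:ℚ)-2))
        + urnMarginal δ (2*i+1) (x-1) * (1 + ((x-1 : ℕ):ℚ)*((δ:ℚ)-2)))
      / ((δ:ℚ) + (2*(i:ℚ))*((δ:ℚ)-2)) := by
  have hD2i := (Dpos δ hδ (2*i)).ne'
  have hDfac : (0:ℚ) < (δ:ℚ) + (2*(i:ℚ))*((δ:ℚ)-2) := by
    have h2 : (2:ℚ) ≤ (δ:ℚ) := by exact_mod_cast hδ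
    have : (0:ℚ) ≤ (i:ℚ) := Nat.cast_nonneg i
    nlinarith
  have hDfac' := hDfac.ne'
  unfold urnMarginal
  have e1 : 2*i+2-1 = 2*i+1 := by omega
  have e2 : 2*i+1-1 = 2*i := by omega
  rw [e1, e2]
  rcases Nat.lt_or_ge (2*i) x with hcase | hcase
  · -- x = 2i+1
    have hx : x = 2*i+1 := by omega
    subst hx
    have c0 : (2*i).choose (2*i+1) = 0 := Nat.choose_eq_zero_of_lt (by omega)
    have e3 : 2*i+1 - (2*i+1) = 0 := by omega
    have e4 : 2*i - (2*i+1) = 0 := by omega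
    have e5 : 2*i+1-1 = 2*i := by omega
    have e6 : 2*i - (2*i) = 0 := by omega
    rw [e3, e4, e5, e6, c0]
    rw [Nat.choose_self, Nat.choose_self]
    rw [Finset.prod_range_succ, Finset.prod_range_succ]
    push_cast
    field_simp
    simp only [mul_comm ((δ:ℚ)-2)]
    ring
  · -- 1 ≤ x ≤ 2i
    obtain ⟨y, rfl⟩ : ∃ y, x = y + 1 := ⟨x - 1, by omega⟩
    simp only [Nat.add_sub_cancel]
    have eB : 2*i+1-(y+1) = (2*i-(y+1))+1 := by omega
    have eB2 : 2*i - y = (2*i-(y+1))+1 := by omega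
    rw [eB, eB2, Nat.choose_succ_succ]
    rw [Finset.prod_range_succ, Finset.prod_range_succ, Finset.prod_range_succ]
    push_cast [Nat.cast_sub (by omega : y+1 ≤ 2*i)]
    field_simp
    simp only [mul_comm ((δ:ℚ)-2)]
    ring

lemma urnRatio (δ : ℕ) (hδ : 2 ≤ δ) (k : ℕ) :
    ((k:ℚ)+1) * urnMarginal δ (2*(k+1)+1) (k+1) = ((k:ℚ)+2) * urnMarginal δ (2*(k+1)+1) (k+2) := by
  have hD := (Dpos δ hδ (2*(k+1))).ne'
  unfold urnMarginal
  have e2 : 2*(k+1)+1-1 = 2*(k+1) := by omega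
  rw [e2]
  have eB : 2*(k+1) - (k+1) = k+1 := by omega
  have eB2 : 2*(k+1) - (k+2) = k := by omega
  rw [eB, eB2]
  have hch : (2*(k+1)).choose (k+2) * (k+2) = (2*(k+1)).choose (k+1) * (k+1) := by
    rw [Nat.choose_succ_right_eq]
    congr 1
  have hchQ : ((2*(k+1)).choose (k+2) : ℚ) * ((k:ℚ)+2) = ((2*(k+1)).choose (k+1) : ℚ) * ((k:ℚ)+1) := by
    exact_mod_cast hch
  rw [Finset.prod_range_succ (n := k+1) (f := fun l => ((1 : ℚ) + (l : ℚ) * ((δ : ℚ) - 2)))]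
  rw [Finset.prod_range_succ (n := k) (f := fun l => (((δ : ℚ) - 1) + (l : ℚ) * ((δ : ℚ) - 2)))]
  set A1 := ∏ l ∈ Finset.range (k+1), ((1 : ℚ) + (l : ℚ) * ((δ : ℚ) - 2)) with hA1d
  set B0 := ∏ l ∈ Finset.range k, (((δ : ℚ) - 1) + (l : ℚ) * ((δ : ℚ) - 2)) with hB0d
  set DD := ∏ l ∈ Finset.range (2*(k+1)), ((δ : ℚ) + (l : ℚ) * ((δ : ℚ) - 2)) with hDDd
  field_simp
  push_cast
  linear_combination (-1 : ℚ) * (A1 * B0 * (1 + ((k:ℚ)+1) * ((δ:ℚ)-2))) * hchQ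

theorem Pe1_even_step (δ : ℕ) (hδ : 2 ≤ δ) (i : ℕ) (hi : 0 < i) :
    Pe1 δ (2 * i + 2) = Pe1 δ (2 * i + 1)
        + (1 / (2 * (i : ℚ))) *
            ((1 + (i : ℚ) * ((δ : ℚ) - 2)) / (2 + (2 * (i : ℚ) + 1) * ((δ : ℚ) - 2))) *
            urnMarginal δ (2 * i + 1) (i + 1) ∧
    (0 < (1 / (2 * (i : ℚ))) *
          ((1 + (i : ℚ) * ((δ : ℚ) - 2)) / (2 + (2 * (i : ℚ) + 1) * ((δ : ℚ) - 2))) *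
          urnMarginal δ (2 * i + 1) (i + 1) →
      Pe1 δ (2 * i + 1) < Pe1 δ (2 * i + 2)) := by
  obtain ⟨k, rfl⟩ : ∃ k, i = k + 1 := ⟨i - 1, by omega⟩
  have h2 : (2:ℚ) ≤ (δ:ℚ) := by exact_mod_cast hδ
  have hk0 : (0:ℚ) ≤ (k:ℚ) := Nat.cast_nonneg k
  have hDfac : (0:ℚ) < (δ:ℚ) + 2*((k+1:ℕ):ℚ)*((δ:ℚ)-2) := by push_cast; nlinarith
  have key : Pe1 δ (2 * (k+1) + 2) = Pe1 δ (2 * (k+1) + 1)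
      + (1 / (2 * ((k+1:ℕ) : ℚ))) *
          ((1 + ((k+1:ℕ) : ℚ) * ((δ : ℚ) - 2)) / (2 + (2 * ((k+1:ℕ) : ℚ) + 1) * ((δ : ℚ) - 2))) *
          urnMarginal δ (2 * (k+1) + 1) (k + 2) := by
    unfold Pe1
    have h1 : (Finset.range (2*(k+1)+2)).filter (fun x => 2*x = 2*(k+1)+2) = {k+2} := by
      ext x
      simp only [Finset.mem_filter, Finset.mem_range, Finset.mem_singleton]
      omega
    have h2f : (Finset.range (2*(k+1)+2)).filter (fun x => 2*x > 2*(k+1)+2)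
        = Finset.Ico (k+3) (2*(k+1)+2) := by
      ext x
      simp only [Finset.mem_filter, Finset.mem_range, Finset.mem_Ico, gt_iff_lt]
      omega
    have h3 : (Finset.range (2*(k+1)+1)).filter (fun x => 2*x = 2*(k+1)+1) = ∅ := by
      ext x
      simp only [Finset.mem_filter, Finset.mem_range, Finset.notMem_empty, iff_false, not_and]
      omega
    have h4 : (Finset.range (2*(k+1)+1)).filter (fun x => 2*x > 2*(k+1)+1)
        = Finset.Ico (k+2) (2*(k+1)+1) := by
      ext x
      simp only [Finset.mem_filter, Finset.mem_range, Finset.mem_Ico, gt_iff_lt]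
      omega
    rw [h1, h2f, h3, h4, Finset.sum_singleton, Finset.sum_empty]
    rw [Finset.sum_Ico_eq_sum_range, Finset.sum_Ico_eq_sum_range]
    rw [show 2*(k+1)+2-(k+3) = k+1 from by omega, show 2*(k+1)+1-(k+2) = k+1 from by omega]
    -- abbreviations
    have hDne : ((δ:ℚ) + (2*((k+1:ℕ):ℚ))*((δ:ℚ)-2)) ≠ 0 := by push_cast; push_cast at hDfac; nlinarith
    -- zero top term
    have hzero : urnMarginal δ (2*(k+1)+1) (k+3+k) = 0 := by
      unfold urnMarginal
      rw [show 2*(k+1)+1-1 = 2*k+2 from by omega,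
        Nat.choose_eq_zero_of_lt (by omega : 2*k+2 < k+3+k)]
      simp
    -- recursion applied to each term of the left sum
    have ha : ∀ j ∈ Finset.range (k+1), urnMarginal δ (2*(k+1)+2) (k+3+j)
        = (urnMarginal δ (2*(k+1)+1) (k+3+j)
              * (((δ:ℚ)-1) + ((2*(k+1) - (k+3+j) : ℕ):ℚ)*((δ:ℚ)-2))
            + urnMarginal δ (2*(k+1)+1) (k+2+j) * (1 + ((k+2+j : ℕ):ℚ)*((δ:ℚ)-2)))
          / ((δ:ℚ) + (2*((k+1:ℕ):ℚ))*((δ:ℚ)-2)) := by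
      intro j hj
      simp only [Finset.mem_range] at hj
      have h := urnRec δ hδ (k+1) (k+3+j) (by omega) (by omega)
      rw [show k+3+j-1 = k+2+j from by omega] at h
      rw [h]
    have hL : ∑ j ∈ Finset.range (k+1), urnMarginal δ (2*(k+1)+2) (k+3+j)
        = (∑ j ∈ Finset.range k, urnMarginal δ (2*(k+1)+1) (k+3+j))
          + urnMarginal δ (2*(k+1)+1) (k+2) * (1 + ((k+2:ℕ):ℚ)*((δ:ℚ)-2))
            / ((δ:ℚ) + (2*((k+1:ℕ):ℚ))*((δ:ℚ)-2)) := by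
      rw [Finset.sum_congr rfl ha, ← Finset.sum_div, Finset.sum_add_distrib]
      rw [Finset.sum_range_succ
        (f := fun j => urnMarginal δ (2*(k+1)+1) (k+3+j)
          * (((δ:ℚ)-1) + ((2*(k+1) - (k+3+j) : ℕ):ℚ)*((δ:ℚ)-2)))]
      rw [hzero, zero_mul, add_zero]
      have hppsum : ∑ j ∈ Finset.range (k+1),
            urnMarginal δ (2*(k+1)+1) (k+2+j) * (1 + ((k+2+j : ℕ):ℚ)*((δ:ℚ)-2))
          = (∑ j ∈ Finset.range k,
              urnMarginal δ (2*(k+1)+1) (k+3+j) * (1 + ((k+3+j : ℕ):ℚ)*((δ:ℚ)-2)))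
            + urnMarginal δ (2*(k+1)+1) (k+2) * (1 + ((k+2 : ℕ):ℚ)*((δ:ℚ)-2)) := by
        rw [Finset.sum_range_succ'
          (f := fun j => urnMarginal δ (2*(k+1)+1) (k+2+j) * (1 + ((k+2+j : ℕ):ℚ)*((δ:ℚ)-2)))]
        congr 1
        refine Finset.sum_congr rfl fun j hj => ?_
        rw [show k+2+(j+1) = k+3+j from by omega]
      rw [hppsum, ← add_assoc, ← Finset.sum_add_distrib]
      have hcomb : ∀ j ∈ Finset.range k,
          urnMarginal δ (2*(k+1)+1) (k+3+j)
              * (((δ:ℚ)-1) + ((2*(k+1) - (k+3+j) : ℕ):ℚ)*((δ:ℚ)-2))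
            + urnMarginal δ (2*(k+1)+1) (k+3+j) * (1 + ((k+3+j : ℕ):ℚ)*((δ:ℚ)-2))
          = urnMarginal δ (2*(k+1)+1) (k+3+j) * ((δ:ℚ) + (2*((k+1:ℕ):ℚ))*((δ:ℚ)-2)) := by
        intro j hj
        simp only [Finset.mem_range] at hj
        rw [show 2*(k+1)-(k+3+j) = k-(j+1) from by omega]
        push_cast [Nat.cast_sub (show j+1 ≤ k by omega)]
        ring
      rw [Finset.sum_congr rfl hcomb, ← Finset.sum_mul, add_div,
        mul_div_cancel_right₀ _ hDne]
    rw [hL]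
    -- right-hand sum
    have hRsum : ∑ j ∈ Finset.range (k+1), urnMarginal δ (2*(k+1)+1) (k+2+j)
        = (∑ j ∈ Finset.range k, urnMarginal δ (2*(k+1)+1) (k+3+j))
          + urnMarginal δ (2*(k+1)+1) (k+2) := by
      rw [Finset.sum_range_succ' (f := fun j => urnMarginal δ (2*(k+1)+1) (k+2+j))]
      congr 1
      refine Finset.sum_congr rfl fun j hj => ?_
      rw [show k+2+(j+1) = k+3+j from by omega]
    rw [hRsum]
    -- middle term recursion
    have hmid := urnRec δ hδ (k+1) (k+2) (by omega) (by omega)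
    rw [show k+2-1 = k+1 from by omega, show 2*(k+1)-(k+2) = k from by omega] at hmid
    rw [hmid]
    -- ratio
    have hratio := urnRatio δ hδ k
    have hk1 : ((k:ℚ)+1) ≠ 0 := by positivity
    have hPk1 : urnMarginal δ (2*(k+1)+1) (k+1)
        = ((k:ℚ)+2) * urnMarginal δ (2*(k+1)+1) (k+2) / ((k:ℚ)+1) := by
      rw [eq_div_iff hk1]
      linarith [hratio]
    rw [hPk1]
    have hD2 : (2:ℚ) + (2*((k+1:ℕ):ℚ)+1)*((δ:ℚ)-2) ≠ 0 := by push_cast; nlinarith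
    push_cast
    push_cast at hDne hD2
    have hDne' : (δ:ℚ) + 2*((δ:ℚ)-2)*((k:ℚ)+1) ≠ 0 := by convert hDne using 1; ring
    have hD2' : (2:ℚ) + ((δ:ℚ)-2)*(2*((k:ℚ)+1)+1) ≠ 0 := by convert hD2 using 1; ring
    field_simp
    ring
  refine ⟨key, fun h => ?_⟩
  rw [key]
  linarith
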